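/- arXiv:1612.06255 — 7 statements merged into one kernel-verified Lean document; each statement's English description precedes it below -/
import Mathlib

section
/- Let A be a real m×n matrix, X_k a real n×m matrix, S a real m×τ matrix, and let M := Sᵀ Aᵀ A Aᵀ A S with Moore–Penrose pseudoinverse M⁺. Define X_{k+1} := X_k − Aᵀ A S M⁺ Sᵀ Aᵀ (A X_k − I). Then X_{k+1} solves the sketched projection problem min ½‖X − X_k‖_F² subject to Sᵀ Aᵀ = Sᵀ Aᵀ A X; that is, Sᵀ Aᵀ A X_{k+1} = Sᵀ Aᵀ, and every real n×m matrix X with Sᵀ Aᵀ A X = Sᵀ Aᵀ satisfies ‖X_{k+1} − X_k‖_F ≤ ‖X − X_k‖_F. -/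
open Matrix

noncomputable def frobNorm {m n : ℕ} (X : Matrix (Fin m) (Fin n) ℝ) : ℝ :=
  Real.sqrt ((Xᵀ * X).trace)

private lemma aux_mul_transpose_eq_zero {a b : ℕ} (X : Matrix (Fin a) (Fin b) ℝ)
    (h : X * Xᵀ = 0) : X = 0 := by
  have h1 : Xᵀᴴ * Xᵀ = 0 := by simpa using h
  have h2 := Matrix.conjTranspose_mul_self_eq_zero.mp h1
  simpa using congrArg Matrix.transpose h2

private lemma aux_trace_nonneg {a b : ℕ} (X : Matrix (Fin a) (Fin b) ℝ) :
    0 ≤ (Xᵀ * X).trace := by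
  rw [Matrix.trace]
  apply Finset.sum_nonneg
  intro i _
  rw [Matrix.diag_apply, Matrix.mul_apply]
  apply Finset.sum_nonneg
  intro j _
  simpa [Matrix.transpose_apply] using mul_self_nonneg (X j i)

/-- If `P` is symmetric and fixes `C * Cᵀ` by left multiplication, then it fixes `C`. -/
private lemma aux_proj_fix {a b : ℕ} (P : Matrix (Fin a) (Fin a) ℝ)
    (C : Matrix (Fin a) (Fin b) ℝ) (hPt : Pᵀ = P) (h : P * (C * Cᵀ) = C * Cᵀ) :
    P * C = C := by
  have hsym : (C * Cᵀ)ᵀ = C * Cᵀ := by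
    rw [Matrix.transpose_mul, Matrix.transpose_transpose]
  have h2 : C * Cᵀ * P = C * Cᵀ := by
    calc C * Cᵀ * P = (Pᵀ * (C * Cᵀ)ᵀ)ᵀ := by simp
      _ = C * Cᵀ := by rw [hPt, hsym, h, hsym]
  have key : (P * C - C) * (P * C - C)ᵀ = 0 := by
    rw [Matrix.transpose_sub, Matrix.transpose_mul, hPt]
    rw [Matrix.sub_mul, Matrix.mul_sub, Matrix.mul_sub]
    rw [← Matrix.mul_assoc (P * C) Cᵀ P, Matrix.mul_assoc P C Cᵀ, h, h2]
    rw [← Matrix.mul_assoc C Cᵀ P, h2]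
    simp
  have := aux_mul_transpose_eq_zero _ key
  exact sub_eq_zero.mp this

/-- The SATAX update `X_{k+1} = X_k − AᵀA S M⁺ Sᵀ Aᵀ (A X_k − I)`, with
`M := Sᵀ Aᵀ A Aᵀ A S`, is the projection of `X_k` onto the sketched constraint
`Sᵀ Aᵀ = Sᵀ Aᵀ A X`: it is feasible, and is the closest feasible point to
`X_k` in Frobenius norm. -/
theorem satax_update_is_projection (m n τ : ℕ)
    (A : Matrix (Fin m) (Fin n) ℝ) (Xk : Matrix (Fin n) (Fin m) ℝ)
    (S : Matrix (Fin n) (Fin τ) ℝ)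
    (M Mp : Matrix (Fin τ) (Fin τ) ℝ)
    (hM : M = Sᵀ * Aᵀ * A * Aᵀ * A * S)
    (hMp1 : M * Mp * M = M) (hMp2 : Mp * M * Mp = Mp)
    (hMp3 : (M * Mp)ᵀ = M * Mp) (hMp4 : (Mp * M)ᵀ = Mp * M)
    (X1 : Matrix (Fin n) (Fin m) ℝ)
    (hX1 : X1 = Xk - Aᵀ * A * S * Mp * Sᵀ * Aᵀ * (A * Xk - 1)) :
    Sᵀ * Aᵀ * A * X1 = Sᵀ * Aᵀ ∧
    ∀ X : Matrix (Fin n) (Fin m) ℝ, Sᵀ * Aᵀ * A * X = Sᵀ * Aᵀ →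
      frobNorm (X1 - Xk) ≤ frobNorm (X - Xk) := by
  -- P := M * Mp is a symmetric projection
  have hPt : (M * Mp)ᵀ = M * Mp := hMp3
  -- P fixes C₁ = Sᵀ Aᵀ A
  have hC1 : M * Mp * (Sᵀ * Aᵀ * A) = Sᵀ * Aᵀ * A := by
    apply aux_proj_fix _ _ hPt
    have hcc : (Sᵀ * Aᵀ * A) * (Sᵀ * Aᵀ * A)ᵀ = M := by
      rw [hM]; simp [Matrix.transpose_mul, Matrix.transpose_transpose, Matrix.mul_assoc]
    rw [hcc]; exact hMp1
  -- P fixes C₂ = Sᵀ Aᵀ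
  have hC2 : M * Mp * (Sᵀ * Aᵀ) = Sᵀ * Aᵀ := by
    apply aux_proj_fix _ _ hPt
    have hcc : (Sᵀ * Aᵀ) * (Sᵀ * Aᵀ)ᵀ = Sᵀ * Aᵀ * A * S := by
      simp [Matrix.transpose_mul, Matrix.transpose_transpose, Matrix.mul_assoc]
    rw [hcc, ← Matrix.mul_assoc, hC1]
  -- feasibility
  have hMassoc : Sᵀ * Aᵀ * A * (Aᵀ * A * S) = M := by
    rw [hM]; simp [Matrix.mul_assoc]
  have feas : Sᵀ * Aᵀ * A * X1 = Sᵀ * Aᵀ := by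
    rw [hX1, Matrix.mul_sub]
    have key : Sᵀ * Aᵀ * A * (Aᵀ * A * S * Mp * Sᵀ * Aᵀ * (A * Xk - 1))
        = Sᵀ * Aᵀ * (A * Xk - 1) := by
      have e1 : Sᵀ * Aᵀ * A * (Aᵀ * A * S * Mp * Sᵀ * Aᵀ * (A * Xk - 1))
          = M * Mp * (Sᵀ * Aᵀ) * (A * Xk - 1) := by
        rw [← hMassoc]; simp [Matrix.mul_assoc]
      rw [e1, hC2]
    rw [key, Matrix.mul_sub, Matrix.mul_one, Matrix.mul_assoc (Sᵀ * Aᵀ) A Xk,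
      ← Matrix.mul_assoc (Sᵀ * Aᵀ) A Xk]
    abel
  refine ⟨feas, ?_⟩
  intro X hX
  have hE : Sᵀ * Aᵀ * A * (X - X1) = 0 := by
    rw [Matrix.mul_sub, hX, feas, sub_self]
  have hE' : Sᵀ * (Aᵀ * (A * (X - X1))) = 0 := by
    simpa [Matrix.mul_assoc] using hE
  have hd : X1 - Xk = -(Aᵀ * A * S * Mp * Sᵀ * Aᵀ * (A * Xk - 1)) := by
    rw [hX1, sub_sub_cancel_left]
  have cross : (X1 - Xk)ᵀ * (X - X1) = 0 := by
    rw [hd, Matrix.transpose_neg, Matrix.neg_mul, neg_eq_zero]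
    simp only [Matrix.transpose_mul, Matrix.transpose_transpose, Matrix.mul_assoc]
    rw [hE']
    simp
  have cross' : ((X - X1)ᵀ * (X1 - Xk)).trace = 0 := by
    rw [← Matrix.trace_transpose, Matrix.transpose_mul, Matrix.transpose_transpose,
      cross, Matrix.trace_zero]
  have expand : ((X - Xk)ᵀ * (X - Xk)).trace
      = ((X1 - Xk)ᵀ * (X1 - Xk)).trace + ((X - X1)ᵀ * (X - X1)).trace := by
    have hsplit : X - Xk = (X - X1) + (X1 - Xk) := by abel
    rw [hsplit]
    simp only [Matrix.transpose_add, Matrix.add_mul, Matrix.mul_add, Matrix.trace_add]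
    rw [cross, Matrix.trace_zero]
    rw [cross']
    ring
  unfold frobNorm
  apply Real.sqrt_le_sqrt
  have := aux_trace_nonneg (X - X1)
  linarith [expand]
end

section
/- Let A be a real m×n matrix with Moore–Penrose pseudoinverse A⁺, S a real m×τ matrix, and M⁺ the Moore–Penrose pseudoinverse of M := Sᵀ Aᵀ A Aᵀ A S. Suppose X_k = Aᵀ A W for some real n×m matrix W, and define X_{k+1} := X_k − Aᵀ A S M⁺ Sᵀ Aᵀ (A X_k − I). Then there exists a real n×m matrix W' such that X_{k+1} − A⁺ = Aᵀ A W'; i.e., the range-space invariance Range(X_{k+1} − A⁺) ⊆ Range(Aᵀ A) is preserved by the SATAX update. -/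
open Matrix

/-- Range-space invariance of the SATAX update: if `X_k = AᵀA W` then
`X_{k+1} − A⁺ = AᵀA W'` for some `W'`. -/
theorem satax_range_invariance (m n τ : ℕ)
    (A : Matrix (Fin m) (Fin n) ℝ) (Ap : Matrix (Fin n) (Fin m) ℝ)
    (hp1 : A * Ap * A = A) (hp2 : Ap * A * Ap = Ap)
    (hp3 : (A * Ap)ᵀ = A * Ap) (hp4 : (Ap * A)ᵀ = Ap * A)
    (S : Matrix (Fin n) (Fin τ) ℝ)
    (M Mp : Matrix (Fin τ) (Fin τ) ℝ)
    (hM : M = Sᵀ * Aᵀ * A * Aᵀ * A * S)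
    (hMp1 : M * Mp * M = M) (hMp2 : Mp * M * Mp = Mp)
    (hMp3 : (M * Mp)ᵀ = M * Mp) (hMp4 : (Mp * M)ᵀ = Mp * M)
    (Xk W : Matrix (Fin n) (Fin m) ℝ) (hXk : Xk = Aᵀ * A * W)
    (X1 : Matrix (Fin n) (Fin m) ℝ)
    (hX1 : X1 = Xk - Aᵀ * A * S * Mp * Sᵀ * Aᵀ * (A * Xk - 1)) :
    ∃ W' : Matrix (Fin n) (Fin m) ℝ, X1 - Ap = Aᵀ * A * W' := by
  have hAp1 : Ap = Aᵀ * Apᵀ * Ap := by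
    calc Ap = Ap * A * Ap := hp2.symm
    _ = (Ap * A)ᵀ * Ap := by rw [hp4]
    _ = Aᵀ * Apᵀ * Ap := by rw [transpose_mul]
  have hApT : Apᵀ = A * Ap * Apᵀ := by
    calc Apᵀ = (Ap * A * Ap)ᵀ := by rw [hp2]
    _ = Apᵀ * (Ap * A)ᵀ := by rw [transpose_mul]
    _ = Apᵀ * Aᵀ * Apᵀ := by rw [transpose_mul, ← Matrix.mul_assoc]
    _ = (A * Ap)ᵀ * Apᵀ := by rw [transpose_mul]
    _ = A * Ap * Apᵀ := by rw [hp3]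
  have hAp : Ap = Aᵀ * A * (Ap * Apᵀ * Ap) := by
    conv_lhs => rw [hAp1, hApT]
    simp only [Matrix.mul_assoc]
  refine ⟨W - S * Mp * Sᵀ * Aᵀ * (A * Xk - 1) - Ap * Apᵀ * Ap, ?_⟩
  rw [hX1, hXk]
  conv_lhs => rw [hAp]
  rw [Matrix.mul_sub, Matrix.mul_sub, Matrix.mul_sub]
  simp only [Matrix.mul_assoc, Matrix.mul_sub, Matrix.mul_one]
end

section
/- Let A be a real m×n matrix with Moore–Penrose pseudoinverse A⁺. Let S_1,…,S_r be real m×τ matrices, and p_1,…,p_r > 0 with Σᵢ pᵢ = 1. For each i, let Mᵢ⁺ be the Moore–Penrose pseudoinverse of Mᵢ := Sᵢᵀ Aᵀ A Aᵀ A Sᵢ, set Hᵢ := Sᵢ Mᵢ⁺ Sᵢᵀ and Zᵢ := Aᵀ A Hᵢ Aᵀ A. Suppose H := Σᵢ pᵢ Hᵢ is positive definite, and let μ > 0 be such that every nonzero eigenvalue of the symmetric matrix Aᵀ A H Aᵀ A is at least μ. Then for every real n×m matrix X of the form X − A⁺ = Aᵀ A W for some W, writing R := X − A⁺, one has Σᵢ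 pᵢ ‖(I − Zᵢ) R‖_F² ≤ (1 − μ) ‖R‖_F². (This is the one-step L2 contraction of the SATAX method with rate ρ = 1 − λ⁺_min(Aᵀ A E[H_S] Aᵀ A).) -/
open Matrix
open scoped RealInnerProductSpace

lemma quad_form_eig (n : ℕ) (Z : Matrix (Fin n) (Fin n) ℝ) (hZ : Z.IsHermitian) (v : Fin n → ℝ) :
    v ⬝ᵥ (Z *ᵥ v) = ∑ j, hZ.eigenvalues j *
      (⟪(WithLp.toLp 2 v), hZ.eigenvectorBasis j⟫)^2 := by
  have hZt : Zᵀ = Z := by simpa using hZ.eq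
  set v' : EuclideanSpace ℝ (Fin n) := WithLp.toLp 2 v with hv'
  have h1 : v ⬝ᵥ (Z *ᵥ v) = ⟪v', (WithLp.toLp 2 (Z *ᵥ v))⟫ := by
    simp [PiLp.inner_apply, dotProduct, hv', mul_comm]
  rw [h1, ← (hZ.eigenvectorBasis).sum_inner_mul_inner v' _]
  congr 1; funext j
  have h2 : ⟪(hZ.eigenvectorBasis j : EuclideanSpace ℝ (Fin n)),
      (WithLp.toLp 2 (Z *ᵥ v))⟫
      = hZ.eigenvalues j * ⟪hZ.eigenvectorBasis j, v'⟫ := by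
    have key : (⇑(hZ.eigenvectorBasis j) : Fin n → ℝ) ⬝ᵥ (Z *ᵥ v)
        = (Z *ᵥ ⇑(hZ.eigenvectorBasis j)) ⬝ᵥ v := by
      rw [dotProduct_mulVec, ← mulVec_transpose, hZt]
    have key2 : (Z *ᵥ ⇑(hZ.eigenvectorBasis j)) ⬝ᵥ v
        = hZ.eigenvalues j * ((⇑(hZ.eigenvectorBasis j) : Fin n → ℝ) ⬝ᵥ v) := by
      rw [hZ.mulVec_eigenvectorBasis j, smul_dotProduct]; rfl
    simp only [PiLp.inner_apply, RCLike.inner_apply, starRingEnd_apply, star_trivial]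
    simpa only [dotProduct, mul_comm, hv', WithLp.ofLp_toLp] using key.trans key2
  rw [h2]
  have hsymm : ⟪v', (hZ.eigenvectorBasis j : EuclideanSpace ℝ (Fin n))⟫
      = ⟪(hZ.eigenvectorBasis j : EuclideanSpace ℝ (Fin n)), v'⟫ := real_inner_comm _ _
  rw [hsymm]; ring

lemma key_lb (n : ℕ) (G Hbar : Matrix (Fin n) (Fin n) ℝ) (hGt : Gᵀ = G)
    (hHpd : Hbar.PosDef) (μ : ℝ)
    (heig : ∀ (c : ℝ) (v : Fin n → ℝ), v ≠ 0 → (G * Hbar * G) *ᵥ v = c • v → c ≠ 0 → μ ≤ c)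
    (w : Fin n → ℝ) :
    μ * ((G *ᵥ w) ⬝ᵥ (G *ᵥ w)) ≤ (G *ᵥ w) ⬝ᵥ ((G * Hbar * G) *ᵥ (G *ᵥ w)) := by
  set Z : Matrix (Fin n) (Fin n) ℝ := G * Hbar * G with hZdef
  have hHt : Hbarᵀ = Hbar := by simpa using hHpd.1.eq
  have hZherm : Z.IsHermitian := by
    show Zᴴ = Z
    simp only [hZdef, conjTranspose_eq_transpose_of_trivial, transpose_mul, hGt, hHt,
      Matrix.mul_assoc]
  set v : Fin n → ℝ := G *ᵥ w with hv
  have hker : ∀ u : Fin n → ℝ, Z *ᵥ u = 0 → G *ᵥ u = 0 := by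
    intro u hu
    by_contra hne
    have h0 : u ⬝ᵥ (Z *ᵥ u) = 0 := by rw [hu, dotProduct_zero]
    have h1 : u ⬝ᵥ (Z *ᵥ u) = (G *ᵥ u) ⬝ᵥ (Hbar *ᵥ (G *ᵥ u)) := by
      rw [hZdef, ← mulVec_mulVec, ← mulVec_mulVec, dotProduct_mulVec u G,
        ← mulVec_transpose, hGt]
    have h2 : 0 < (G *ᵥ u) ⬝ᵥ (Hbar *ᵥ (G *ᵥ u)) := by
      have := hHpd.dotProduct_mulVec_pos hne
      simpa using this
    rw [h1] at h0; linarith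
  rw [quad_form_eig n Z hZherm v]
  set b := hZherm.eigenvectorBasis with hb
  have hpar : v ⬝ᵥ v = ∑ j, (⟪(WithLp.toLp 2 v), b j⟫)^2 := by
    have := b.sum_inner_mul_inner (WithLp.toLp 2 v)
      (WithLp.toLp 2 v)
    have hvv : ⟪(WithLp.toLp 2 v), (WithLp.toLp 2 v)⟫
        = v ⬝ᵥ v := by simp only [PiLp.inner_apply, RCLike.inner_apply, conj_trivial, dotProduct, WithLp.ofLp_toLp]
    rw [← hvv, ← this]
    congr 1; funext j
    rw [sq, real_inner_comm (b j)]
  rw [hpar, Finset.mul_sum]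
  apply Finset.sum_le_sum
  intro j _
  by_cases hc : hZherm.eigenvalues j = 0
  · have hbz : Z *ᵥ ⇑(b j) = 0 := by
      rw [hb, hZherm.mulVec_eigenvectorBasis j, hc, zero_smul]
    have hGz : G *ᵥ ⇑(b j) = 0 := hker _ hbz
    have hip : ⟪(WithLp.toLp 2 v), b j⟫ = 0 := by
      have : v ⬝ᵥ ⇑(b j) = 0 := by
        rw [hv, dotProduct_comm, dotProduct_mulVec, ← mulVec_transpose, hGt, hGz, zero_dotProduct]
      simpa [PiLp.inner_apply, dotProduct, mul_comm] using this
    rw [hip]; simp [hc]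
  · have hmu : μ ≤ hZherm.eigenvalues j := by
      apply heig _ ⇑(b j) _ _ hc
      · intro h0
        exact b.orthonormal.ne_zero j (by ext i; exact congrFun h0 i)
      · exact hZherm.mulVec_eigenvectorBasis j
    exact mul_le_mul_of_nonneg_right hmu (sq_nonneg _)

lemma trace_conj_cols (n m : ℕ) (B : Matrix (Fin n) (Fin n) ℝ) (R : Matrix (Fin n) (Fin m) ℝ) :
    (Rᵀ * B * R).trace = ∑ k, (fun j => R j k) ⬝ᵥ (B *ᵥ (fun j => R j k)) := by
  simp only [trace, diag, Matrix.mul_apply, transpose_apply, dotProduct, mulVec,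
    Finset.sum_mul, Finset.mul_sum]
  refine Finset.sum_congr rfl fun k _ => ?_
  rw [Finset.sum_comm]
  exact Finset.sum_congr rfl fun a _ => Finset.sum_congr rfl fun b _ => by ring

lemma trace_sq_cols (n m : ℕ) (R : Matrix (Fin n) (Fin m) ℝ) :
    (Rᵀ * R).trace = ∑ k, (fun j => R j k) ⬝ᵥ (fun j => R j k) := by
  simp only [trace, diag, Matrix.mul_apply, transpose_apply, dotProduct]

lemma trace_sq_nonneg (n m : ℕ) (R : Matrix (Fin n) (Fin m) ℝ) : 0 ≤ (Rᵀ * R).trace := by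
  rw [trace_sq_cols]
  exact Finset.sum_nonneg fun k _ => Finset.sum_nonneg fun j _ => mul_self_nonneg _

lemma frobNorm_sq {m n : ℕ} (X : Matrix (Fin m) (Fin n) ℝ) :
    (frobNorm X) ^ 2 = (Xᵀ * X).trace := by
  rw [frobNorm, sq, Real.mul_self_sqrt (trace_sq_nonneg _ _ _)]

lemma pinv_unique {k : ℕ} (M B C : Matrix (Fin k) (Fin k) ℝ)
    (hB1 : M * B * M = M) (hB2 : B * M * B = B)
    (hB3 : (M * B)ᵀ = M * B) (hB4 : (B * M)ᵀ = B * M)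
    (hC1 : M * C * M = M) (hC2 : C * M * C = C)
    (hC3 : (M * C)ᵀ = M * C) (hC4 : (C * M)ᵀ = C * M) : B = C := by
  have e1 : M * B = M * C := by
    calc M * B = (M * C * M) * B := by rw [hC1]
    _ = (M * C) * (M * B) := by simp only [Matrix.mul_assoc]
    _ = (M * C)ᵀ * (M * B)ᵀ := by rw [hC3, hB3]
    _ = Cᵀ * (M * B * M)ᵀ := by simp only [transpose_mul, Matrix.mul_assoc]
    _ = Cᵀ * Mᵀ := by rw [hB1]
    _ = (M * C)ᵀ := by rw [transpose_mul]
    _ = M * C := hC3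
  have e2 : B * M = C * M := by
    calc B * M = B * (M * C * M) := by rw [hC1]
    _ = (B * M) * (C * M) := by simp only [Matrix.mul_assoc]
    _ = (B * M)ᵀ * (C * M)ᵀ := by rw [hB4, hC4]
    _ = (M * B * M)ᵀ * Cᵀ := by simp only [transpose_mul, Matrix.mul_assoc]
    _ = Mᵀ * Cᵀ := by rw [hB1]
    _ = (C * M)ᵀ := by rw [transpose_mul]
    _ = C * M := hC4
  calc B = B * M * B := hB2.symm
  _ = B * (M * C) := by rw [Matrix.mul_assoc, e1]
  _ = (B * M) * C := by rw [Matrix.mul_assoc]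
  _ = C * M * C := by rw [e2]
  _ = C := hC2

lemma pinv_symm {k : ℕ} (M B : Matrix (Fin k) (Fin k) ℝ) (hMs : Mᵀ = M)
    (hB1 : M * B * M = M) (hB2 : B * M * B = B)
    (hB3 : (M * B)ᵀ = M * B) (hB4 : (B * M)ᵀ = B * M) : Bᵀ = B := by
  have hx : M * Bᵀ = B * M := by
    calc M * Bᵀ = (B * Mᵀ)ᵀ := by rw [transpose_mul, transpose_transpose]
    _ = (B * M)ᵀ := by rw [hMs]
    _ = B * M := hB4
  have hy : Bᵀ * M = M * B := by
    calc Bᵀ * M = (Mᵀ * B)ᵀ := by rw [transpose_mul, transpose_transpose]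
    _ = (M * B)ᵀ := by rw [hMs]
    _ = M * B := hB3
  refine (pinv_unique M B Bᵀ hB1 hB2 hB3 hB4 ?_ ?_ ?_ ?_).symm
  · calc M * Bᵀ * M = (Mᵀ * B * Mᵀ)ᵀ := by simp only [transpose_mul, transpose_transpose, Matrix.mul_assoc]
    _ = (M * B * M)ᵀ := by rw [hMs]
    _ = Mᵀ := by rw [hB1]
    _ = M := hMs
  · calc Bᵀ * M * Bᵀ = (B * Mᵀ * B)ᵀ := by simp only [transpose_mul, transpose_transpose, Matrix.mul_assoc]
    _ = (B * M * B)ᵀ := by rw [hMs]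
    _ = Bᵀ := by rw [hB2]
  · rw [hx]; exact hB4
  · rw [hy]; exact hB3

/-- One-step L2 contraction of the SATAX method: for a discrete sketch
distribution `S_i` with probabilities `p_i`, `H_i := S_i M_i⁺ S_iᵀ`,
`Z_i := AᵀA H_i AᵀA`, `H := Σ_i p_i H_i` positive definite, and `μ > 0` a lower
bound on the nonzero eigenvalues of `AᵀA H AᵀA`, every `X` with
`X − A⁺ ∈ Range(AᵀA)` (residual `R := X − A⁺`) satisfies
`Σ_i p_i ‖(I − Z_i) R‖_F² ≤ (1 − μ) ‖R‖_F²`. -/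
theorem satax_one_step_contraction (m n τ r : ℕ)
    (A : Matrix (Fin m) (Fin n) ℝ) (Ap : Matrix (Fin n) (Fin m) ℝ)
    (hp1 : A * Ap * A = A) (hp2 : Ap * A * Ap = Ap)
    (hp3 : (A * Ap)ᵀ = A * Ap) (hp4 : (Ap * A)ᵀ = Ap * A)
    (S : Fin r → Matrix (Fin n) (Fin τ) ℝ)
    (p : Fin r → ℝ) (hppos : ∀ i, 0 < p i) (hpsum : ∑ i, p i = 1)
    (M Mp : Fin r → Matrix (Fin τ) (Fin τ) ℝ)
    (hM : ∀ i, M i = (S i)ᵀ * Aᵀ * A * Aᵀ * A * S i)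
    (hMp1 : ∀ i, M i * Mp i * M i = M i) (hMp2 : ∀ i, Mp i * M i * Mp i = Mp i)
    (hMp3 : ∀ i, (M i * Mp i)ᵀ = M i * Mp i) (hMp4 : ∀ i, (Mp i * M i)ᵀ = Mp i * M i)
    (H : Fin r → Matrix (Fin n) (Fin n) ℝ) (hH : ∀ i, H i = S i * Mp i * (S i)ᵀ)
    (Z : Fin r → Matrix (Fin n) (Fin n) ℝ) (hZ : ∀ i, Z i = Aᵀ * A * H i * Aᵀ * A)
    (Hbar : Matrix (Fin n) (Fin n) ℝ) (hHbar : Hbar = ∑ i, p i • H i)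
    (hHpd : Hbar.PosDef)
    (μ : ℝ) (hμ : 0 < μ)
    (heig : ∀ (c : ℝ) (v : Fin n → ℝ), v ≠ 0 →
      (Aᵀ * A * Hbar * Aᵀ * A).mulVec v = c • v → c ≠ 0 → μ ≤ c) :
    ∀ (X W : Matrix (Fin n) (Fin m) ℝ), X - Ap = Aᵀ * A * W →
      ∑ i, p i * (frobNorm ((1 - Z i) * (X - Ap))) ^ 2 ≤
        (1 - μ) * (frobNorm (X - Ap)) ^ 2 := by
  intro X W hXW
  set R : Matrix (Fin n) (Fin m) ℝ := X - Ap with hR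
  have hGt : (Aᵀ * A)ᵀ = Aᵀ * A := by rw [transpose_mul, transpose_transpose]
  have hMsymm : ∀ i, (M i)ᵀ = M i := by
    intro i; rw [hM i]; simp only [transpose_mul, transpose_transpose, Matrix.mul_assoc]
  have hMpsymm : ∀ i, (Mp i)ᵀ = Mp i := fun i =>
    pinv_symm _ _ (hMsymm i) (hMp1 i) (hMp2 i) (hMp3 i) (hMp4 i)
  have hHsymm : ∀ i, (H i)ᵀ = H i := by
    intro i; rw [hH i]
    simp only [transpose_mul, transpose_transpose, Matrix.mul_assoc, hMpsymm i]
  have hZsymm : ∀ i, (Z i)ᵀ = Z i := by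
    intro i; rw [hZ i]
    simp only [transpose_mul, transpose_transpose, Matrix.mul_assoc, hHsymm i]
  have hZidem : ∀ i, Z i * Z i = Z i := by
    intro i
    have h1 : Z i * Z i = Aᵀ * A * S i * (Mp i * M i * Mp i) * (S i)ᵀ * (Aᵀ * A) := by
      rw [hZ i, hH i, hM i]; simp only [Matrix.mul_assoc]
    rw [h1, hMp2 i, hZ i, hH i]; simp only [Matrix.mul_assoc]
  have hfrob : ∀ (i : Fin r),
      (frobNorm ((1 - Z i) * R))^2 = (Rᵀ * R).trace - (Rᵀ * (Z i) * R).trace := by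
    intro i
    rw [frobNorm_sq]
    have hproj : (1 - Z i) * (1 - Z i) = 1 - Z i := by
      simp only [Matrix.sub_mul, Matrix.mul_sub, Matrix.one_mul, Matrix.mul_one, hZidem i]
      abel
    have h1z : (1 - Z i)ᵀ = 1 - Z i := by
      rw [transpose_sub, transpose_one, hZsymm i]
    have h2 : ((1 - Z i) * R)ᵀ * ((1 - Z i) * R) = Rᵀ * R - Rᵀ * (Z i) * R := by
      rw [transpose_mul]
      calc Rᵀ * (1 - Z i)ᵀ * ((1 - Z i) * R)
          = Rᵀ * ((1 - Z i) * ((1 - Z i) * R)) := by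
            rw [h1z, Matrix.mul_assoc]
      _ = Rᵀ * (((1 - Z i) * (1 - Z i)) * R) := by rw [Matrix.mul_assoc]
      _ = Rᵀ * ((1 - Z i) * R) := by rw [hproj]
      _ = Rᵀ * R - Rᵀ * (Z i) * R := by
            rw [Matrix.sub_mul, Matrix.one_mul, Matrix.mul_sub, Matrix.mul_assoc]
    rw [h2, trace_sub]
  set Zb : Matrix (Fin n) (Fin n) ℝ := Aᵀ * A * Hbar * Aᵀ * A with hZb
  have hZbar : Zb = ∑ i, p i • Z i := by
    rw [hZb, hHbar]
    calc Aᵀ * A * (∑ i, p i • H i) * Aᵀ * A = ∑ i, p i • (Aᵀ * A * H i * Aᵀ * A) := by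
          rw [Matrix.mul_sum, Matrix.sum_mul, Matrix.sum_mul]
          refine Finset.sum_congr rfl fun i _ => ?_
          simp only [Matrix.mul_smul, Matrix.smul_mul]
    _ = ∑ i, p i • Z i := Finset.sum_congr rfl fun i _ => by rw [hZ i]
  have htr : (Rᵀ * Zb * R).trace = ∑ i, p i * (Rᵀ * Z i * R).trace := by
    have hmid : Rᵀ * Zb * R = ∑ i, p i • (Rᵀ * Z i * R) := by
      rw [hZbar, Matrix.mul_sum, Matrix.sum_mul]
      exact Finset.sum_congr rfl fun i _ => by simp only [Matrix.mul_smul, Matrix.smul_mul]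
    rw [hmid, trace_sum]
    exact Finset.sum_congr rfl fun i _ => by rw [trace_smul]; rfl
  have hcols : ∀ k : Fin m, (fun j => R j k) = (Aᵀ * A) *ᵥ (fun j => W j k) := by
    intro k; funext j
    rw [show R = Aᵀ * A * W from hXW]
    simp [mulVec, Matrix.mul_apply, dotProduct]
  have hassoc : (Aᵀ * A) * Hbar * (Aᵀ * A) = Zb := by
    rw [hZb]; simp only [Matrix.mul_assoc]
  have hmain : μ * (Rᵀ * R).trace ≤ (Rᵀ * Zb * R).trace := by
    rw [trace_conj_cols, trace_sq_cols, Finset.mul_sum]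
    apply Finset.sum_le_sum
    intro k _
    rw [hcols k]
    have hkl := key_lb n (Aᵀ * A) Hbar hGt hHpd μ
      (fun c v hv hev hc => heig c v hv (by rwa [hassoc] at hev) hc) (fun j => W j k)
    rwa [hassoc] at hkl
  have hfr : (frobNorm R)^2 = (Rᵀ * R).trace := frobNorm_sq R
  calc ∑ i, p i * (frobNorm ((1 - Z i) * R))^2
      = ∑ i, (p i * (Rᵀ * R).trace - p i * (Rᵀ * Z i * R).trace) := by
        refine Finset.sum_congr rfl fun i _ => ?_
        rw [hfrob i]; ring
  _ = (∑ i, p i) * (Rᵀ * R).trace - ∑ i, p i * (Rᵀ * Z i * R).trace := by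
        rw [Finset.sum_sub_distrib, Finset.sum_mul]
  _ = (Rᵀ * R).trace - (Rᵀ * Zb * R).trace := by rw [hpsum, one_mul, htr]
  _ ≤ (Rᵀ * R).trace - μ * (Rᵀ * R).trace := by linarith [hmain]
  _ = (1 - μ) * (Rᵀ * R).trace := by ring
  _ = (1 - μ) * (frobNorm R)^2 := by rw [hfr]
end

section
/- Let A be a real m×n matrix with Moore–Penrose pseudoinverse A⁺, X_k a real n×m matrix, S a real m×τ matrix, and M⁺ the Moore–Penrose pseudoinverse of M := Sᵀ Aᵀ A Aᵀ A S. Then the SATAX update X_{k+1} := X_k − Aᵀ A S M⁺ Sᵀ Aᵀ (A X_k − I) is monotonic: ‖X_{k+1} − A⁺‖_F ≤ ‖X_k − A⁺‖_F. -/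
open Matrix

lemma trace_tmul_nonneg {m n : ℕ} (X : Matrix (Fin m) (Fin n) ℝ) :
    0 ≤ (Xᵀ * X).trace := by
  simp only [Matrix.trace, Matrix.diag_apply, Matrix.mul_apply, Matrix.transpose_apply]
  refine Finset.sum_nonneg fun i _ => Finset.sum_nonneg fun j _ => mul_self_nonneg _

/-- The pseudoinverse of a symmetric matrix is symmetric. -/
lemma pinv_symm_s10 {τ : ℕ} (M Mp : Matrix (Fin τ) (Fin τ) ℝ)
    (hMsym : Mᵀ = M)
    (hMp1 : M * Mp * M = M) (hMp2 : Mp * M * Mp = Mp)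
    (hMp3 : (M * Mp)ᵀ = M * Mp) (hMp4 : (Mp * M)ᵀ = Mp * M) :
    Mpᵀ = Mp := by
  have h1 : Mpᵀ * M = M * Mp := by
    calc Mpᵀ * M = Mpᵀ * Mᵀ := by rw [hMsym]
    _ = (M * Mp)ᵀ := (Matrix.transpose_mul M Mp).symm
    _ = M * Mp := hMp3
  have h2 : M * Mpᵀ = Mp * M := by
    calc M * Mpᵀ = Mᵀ * Mpᵀ := by rw [hMsym]
    _ = (Mp * M)ᵀ := (Matrix.transpose_mul Mp M).symm
    _ = Mp * M := hMp4
  have hMp1' : M * Mpᵀ * M = M := by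
    have := congrArg Matrix.transpose hMp1
    simpa [Matrix.transpose_mul, hMsym, Matrix.mul_assoc] using this
  have hP'sym : (M * Mpᵀ)ᵀ = M * Mpᵀ := by
    rw [Matrix.transpose_mul, Matrix.transpose_transpose, hMsym, h2]
  have hP'P : M * Mpᵀ = (M * Mp) * (M * Mpᵀ) := by
    calc M * Mpᵀ = (M * Mp * M) * Mpᵀ := by rw [hMp1]
    _ = (M * Mp) * (M * Mpᵀ) := by rw [mul_assoc, mul_assoc]
  have hPP' : M * Mp = (M * Mpᵀ) * (M * Mp) := by
    calc M * Mp = (M * Mpᵀ * M) * Mp := by rw [hMp1']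
    _ = (M * Mpᵀ) * (M * Mp) := by rw [mul_assoc, mul_assoc]
  have h3 : M * Mpᵀ = M * Mp := by
    calc M * Mpᵀ = (M * Mpᵀ)ᵀ := hP'sym.symm
    _ = ((M * Mp) * (M * Mpᵀ))ᵀ := by rw [← hP'P]
    _ = (M * Mpᵀ)ᵀ * (M * Mp)ᵀ := Matrix.transpose_mul _ _
    _ = (M * Mpᵀ) * (M * Mp) := by rw [hP'sym, hMp3]
    _ = M * Mp := hPP'.symm
  have h4 : Mpᵀ * M = Mp * M := by rw [h1, ← h3, h2]
  have hB2 : Mpᵀ * M * Mpᵀ = Mpᵀ := by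
    have := congrArg Matrix.transpose hMp2
    simpa [Matrix.transpose_mul, hMsym, Matrix.mul_assoc] using this
  calc Mpᵀ = Mpᵀ * M * Mpᵀ := hB2.symm
  _ = (Mp * M) * Mpᵀ := by rw [h4]
  _ = Mp * (M * Mpᵀ) := by rw [mul_assoc]
  _ = Mp * (M * Mp) := by rw [h3]
  _ = Mp := by rw [← mul_assoc, hMp2]

/-- Q = C (CᵀC)⁺ Cᵀ is a symmetric idempotent. -/
lemma proj_symm_idem {n τ : ℕ} (C : Matrix (Fin n) (Fin τ) ℝ)
    (Mp : Matrix (Fin τ) (Fin τ) ℝ) (hMpsym : Mpᵀ = Mp)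
    (hMp2 : Mp * (Cᵀ * C) * Mp = Mp) :
    (C * Mp * Cᵀ)ᵀ = C * Mp * Cᵀ ∧
      (C * Mp * Cᵀ) * (C * Mp * Cᵀ) = C * Mp * Cᵀ := by
  constructor
  · simp only [Matrix.transpose_mul, Matrix.transpose_transpose, hMpsym, Matrix.mul_assoc]
  · have := congrArg (fun X => C * X * Cᵀ) hMp2
    simpa only [Matrix.mul_assoc] using this

/-- Contraction property of an orthogonal projector on the Frobenius trace. -/
lemma proj_trace_le {m n : ℕ} (Q : Matrix (Fin n) (Fin n) ℝ)
    (E : Matrix (Fin n) (Fin m) ℝ) (hQsym : Qᵀ = Q) (hQidem : Q * Q = Q) :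
    ((E - Q * E)ᵀ * (E - Q * E)).trace ≤ (Eᵀ * E).trace := by
  have h1 : (Q * E)ᵀ * (Q * E) = Eᵀ * (Q * E) := by
    rw [Matrix.transpose_mul, hQsym, Matrix.mul_assoc, ← Matrix.mul_assoc Q Q E, hQidem]
  have h2 : (Q * E)ᵀ * E = Eᵀ * (Q * E) := by
    rw [Matrix.transpose_mul, hQsym, Matrix.mul_assoc]
  have hexp : (E - Q * E)ᵀ * (E - Q * E) = Eᵀ * E - (Q * E)ᵀ * (Q * E) := by
    rw [Matrix.transpose_sub, Matrix.sub_mul, Matrix.mul_sub, Matrix.mul_sub, h1, h2]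
    abel
  rw [hexp, Matrix.trace_sub]
  have := trace_tmul_nonneg (Q * E)
  linarith

/-- Monotonicity of the SATAX update: the Frobenius distance to the
pseudoinverse does not increase. -/
theorem satax_monotone (m n τ : ℕ)
    (A : Matrix (Fin m) (Fin n) ℝ) (Ap : Matrix (Fin n) (Fin m) ℝ)
    (hp1 : A * Ap * A = A) (hp2 : Ap * A * Ap = Ap)
    (hp3 : (A * Ap)ᵀ = A * Ap) (hp4 : (Ap * A)ᵀ = Ap * A)
    (Xk : Matrix (Fin n) (Fin m) ℝ)
    (S : Matrix (Fin n) (Fin τ) ℝ)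
    (M Mp : Matrix (Fin τ) (Fin τ) ℝ)
    (hM : M = Sᵀ * Aᵀ * A * Aᵀ * A * S)
    (hMp1 : M * Mp * M = M) (hMp2 : Mp * M * Mp = Mp)
    (hMp3 : (M * Mp)ᵀ = M * Mp) (hMp4 : (Mp * M)ᵀ = Mp * M)
    (X1 : Matrix (Fin n) (Fin m) ℝ)
    (hX1 : X1 = Xk - Aᵀ * A * S * Mp * Sᵀ * Aᵀ * (A * Xk - 1)) :
    frobNorm (X1 - Ap) ≤ frobNorm (Xk - Ap) := by
  have hMsym : Mᵀ = M := by
    subst hM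
    simp only [Matrix.transpose_mul, Matrix.transpose_transpose, Matrix.mul_assoc]
  have hMpsym : Mpᵀ = Mp := pinv_symm_s10 M Mp hMsym hMp1 hMp2 hMp3 hMp4
  -- C := Aᵀ A S, M = Cᵀ C
  have hCtC : (Aᵀ * A * S)ᵀ * (Aᵀ * A * S) = M := by
    rw [hM]
    simp only [Matrix.transpose_mul, Matrix.transpose_transpose, Matrix.mul_assoc]
  obtain ⟨hQsym, hQidem⟩ :=
    proj_symm_idem (Aᵀ * A * S) Mp hMpsym (by rw [hCtC]; exact hMp2)
  -- key : Aᵀ A Ap = Aᵀ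
  have hkey : Aᵀ * (A * Ap) = Aᵀ := by
    have := congrArg Matrix.transpose hp1
    rw [Matrix.transpose_mul, hp3] at this
    exact this
  -- rewrite update as E - Q E
  have hstep : X1 - Ap =
      (Xk - Ap) - (Aᵀ * A * S * Mp * (Aᵀ * A * S)ᵀ) * (Xk - Ap) := by
    rw [hX1]
    simp only [Matrix.transpose_mul, Matrix.transpose_transpose, Matrix.mul_sub,
      Matrix.mul_one, Matrix.mul_assoc, hkey]
    abel
  have htr := proj_trace_le (Aᵀ * A * S * Mp * (Aᵀ * A * S)ᵀ) (Xk - Ap) hQsym hQidem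
  rw [← hstep] at htr
  exact Real.sqrt_le_sqrt htr
end

section
/- Let A be a real symmetric n×n matrix with Moore–Penrose pseudoinverse A⁺, X_k a real n×n matrix, S a real n×τ matrix, and M⁺ the Moore–Penrose pseudoinverse of M := Sᵀ A² S. Let Z := A S M⁺ Sᵀ A and define the SAXAS update X_{k+1} := X_k + A S M⁺ Sᵀ (A − A X_k A) S M⁺ Sᵀ A. Then the residuals R_k := X_k − A⁺ and R_{k+1} := X_{k+1} − A⁺ satisfy the recursion R_{k+1} = R_k − Z R_k Z. -/
open Matrix

/-- The SAXAS residuals satisfy `R_{k+1} = R_k − Z R_k Z` where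
`Z := A S M⁺ Sᵀ A`, `M := Sᵀ A² S`, and `R_k := X_k − A⁺`. -/
theorem saxas_residual_recursion (n τ : ℕ)
    (A : Matrix (Fin n) (Fin n) ℝ) (hA : Aᵀ = A)
    (Ap : Matrix (Fin n) (Fin n) ℝ)
    (hp1 : A * Ap * A = A) (hp2 : Ap * A * Ap = Ap)
    (hp3 : (A * Ap)ᵀ = A * Ap) (hp4 : (Ap * A)ᵀ = Ap * A)
    (Xk : Matrix (Fin n) (Fin n) ℝ)
    (S : Matrix (Fin n) (Fin τ) ℝ)
    (M Mp : Matrix (Fin τ) (Fin τ) ℝ)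
    (hM : M = Sᵀ * (A * A) * S)
    (hMp1 : M * Mp * M = M) (hMp2 : Mp * M * Mp = Mp)
    (hMp3 : (M * Mp)ᵀ = M * Mp) (hMp4 : (Mp * M)ᵀ = Mp * M)
    (Z : Matrix (Fin n) (Fin n) ℝ) (hZ : Z = A * S * Mp * Sᵀ * A)
    (X1 : Matrix (Fin n) (Fin n) ℝ)
    (hX1 : X1 = Xk + A * S * Mp * Sᵀ * (A - A * Xk * A) * S * Mp * Sᵀ * A) :
    X1 - Ap = (Xk - Ap) - Z * (Xk - Ap) * Z := by
  subst hZ hX1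
  have key : A * S * Mp * Sᵀ * A * Ap * (A * S * Mp * Sᵀ * A)
      = A * S * Mp * Sᵀ * (A * S * Mp * Sᵀ * A) := by
    calc A * S * Mp * Sᵀ * A * Ap * (A * S * Mp * Sᵀ * A)
        = A * S * Mp * Sᵀ * (A * Ap * A * (S * Mp * (Sᵀ * A))) := by
          simp only [Matrix.mul_assoc]
      _ = A * S * Mp * Sᵀ * (A * S * Mp * Sᵀ * A) := by
          rw [hp1]; simp only [Matrix.mul_assoc]
  have expand : A * S * Mp * Sᵀ * A * (Xk - Ap) * (A * S * Mp * Sᵀ * A)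
      = A * S * Mp * Sᵀ * A * Xk * (A * S * Mp * Sᵀ * A)
        - A * S * Mp * Sᵀ * (A * S * Mp * Sᵀ * A) := by
    rw [Matrix.mul_sub, Matrix.sub_mul, key]
  rw [expand]
  simp only [Matrix.mul_sub, Matrix.sub_mul, Matrix.add_mul, Matrix.mul_assoc]
  abel
end

section
/- Let A be a real symmetric n×n matrix with Moore–Penrose pseudoinverse A⁺, and let (A²)⁺ denote the Moore–Penrose pseudoinverse of A². Then A (A²)⁺ A (A²)⁺ A = A⁺. (Equivalently, starting the SAXAS iteration from X_0 = 0 with the full sketch S = I yields the pseudoinverse in one step.) -/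
open Matrix

/-- Uniqueness of the Moore–Penrose pseudoinverse. -/
lemma pinv_unique_aux (n : ℕ) (M P Q : Matrix (Fin n) (Fin n) ℝ)
    (hP1 : M * P * M = M) (hP2 : P * M * P = P)
    (hP3 : (M * P)ᵀ = M * P) (hP4 : (P * M)ᵀ = P * M)
    (hQ1 : M * Q * M = M) (hQ2 : Q * M * Q = Q)
    (hQ3 : (M * Q)ᵀ = M * Q) (hQ4 : (Q * M)ᵀ = Q * M) : P = Q := by
  have hMP : M * P = M * Q := by
    calc M * P = (M * P)ᵀ := hP3.symm
    _ = ((M * Q * M) * P)ᵀ := by rw [hQ1]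
    _ = (M * P)ᵀ * (M * Q)ᵀ := by simp only [transpose_mul, Matrix.mul_assoc]
    _ = (M * P) * (M * Q) := by rw [hP3, hQ3]
    _ = (M * P * M) * Q := by simp only [Matrix.mul_assoc]
    _ = M * Q := by rw [hP1]
  have hPM : P * M = Q * M := by
    calc P * M = (P * M)ᵀ := hP4.symm
    _ = (P * (M * Q * M))ᵀ := by rw [hQ1]
    _ = (Q * M)ᵀ * (P * M)ᵀ := by simp only [transpose_mul, Matrix.mul_assoc]
    _ = (Q * M) * (P * M) := by rw [hP4, hQ4]
    _ = Q * (M * P * M) := by simp only [Matrix.mul_assoc]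
    _ = Q * M := by rw [hP1]
  calc P = P * M * P := hP2.symm
  _ = Q * M * P := by rw [hPM]
  _ = Q * (M * P) := by rw [Matrix.mul_assoc]
  _ = Q * (M * Q) := by rw [hMP]
  _ = Q * M * Q := by rw [Matrix.mul_assoc]
  _ = Q := hQ2

/-- For a symmetric matrix `A`, with `(A²)⁺` the pseudoinverse of `A²`,
`A (A²)⁺ A (A²)⁺ A = A⁺`: the full-sketch SAXAS iteration started at `X₀ = 0`
yields the pseudoinverse in one step. -/
theorem saxas_full_sketch_one_step (n : ℕ)
    (A : Matrix (Fin n) (Fin n) ℝ) (hA : Aᵀ = A)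
    (Ap : Matrix (Fin n) (Fin n) ℝ)
    (hp1 : A * Ap * A = A) (hp2 : Ap * A * Ap = Ap)
    (hp3 : (A * Ap)ᵀ = A * Ap) (hp4 : (Ap * A)ᵀ = Ap * A)
    (A2p : Matrix (Fin n) (Fin n) ℝ)
    (hq1 : (A * A) * A2p * (A * A) = A * A) (hq2 : A2p * (A * A) * A2p = A2p)
    (hq3 : ((A * A) * A2p)ᵀ = (A * A) * A2p) (hq4 : (A2p * (A * A))ᵀ = A2p * (A * A)) :
    A * A2p * A * A2p * A = Ap := by
  have h1 : A * Apᵀ = Ap * A := by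
    calc A * Apᵀ = Aᵀ * Apᵀ := by rw [hA]
    _ = (Ap * A)ᵀ := (transpose_mul _ _).symm
    _ = Ap * A := hp4
  have e1 : A * Apᵀ * A = A := by
    have h := congrArg Matrix.transpose hp1
    simp only [transpose_mul, hA, Matrix.mul_assoc] at h ⊢
    exact h
  have e2 : Apᵀ * A * Apᵀ = Apᵀ := by
    have h := congrArg Matrix.transpose hp2
    simp only [transpose_mul, hA, Matrix.mul_assoc] at h ⊢
    exact h
  have e3 : (A * Apᵀ)ᵀ = A * Apᵀ := by rw [h1]; exact hp4
  have e4 : (Apᵀ * A)ᵀ = Apᵀ * A := by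
    have h2 : Apᵀ * A = A * Ap := by
      calc Apᵀ * A = Apᵀ * Aᵀ := by rw [hA]
      _ = (A * Ap)ᵀ := (transpose_mul _ _).symm
      _ = A * Ap := hp3
    rw [h2]; exact hp3
  have hApt : Apᵀ = Ap := pinv_unique_aux n A Apᵀ Ap e1 e2 e3 e4 hp1 hp2 hp3 hp4
  have c : A * Ap = Ap * A := by
    calc A * Ap = (A * Ap)ᵀ := hp3.symm
    _ = Apᵀ * Aᵀ := transpose_mul _ _
    _ = Ap * A := by rw [hApt, hA]
  have f1 : A * Ap * Ap = Ap := by rw [c]; exact hp2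
  have f2 : Ap * Ap * A = Ap := by
    calc Ap * Ap * A = Ap * (Ap * A) := Matrix.mul_assoc _ _ _
    _ = Ap * (A * Ap) := by rw [c]
    _ = Ap * A * Ap := (Matrix.mul_assoc _ _ _).symm
    _ = Ap := hp2
  have f4 : Ap * A * A = A := by rw [← c]; exact hp1
  have s1 : (A * A) * (Ap * Ap) = A * Ap := by
    calc (A * A) * (Ap * Ap) = A * (A * Ap * Ap) := by simp only [Matrix.mul_assoc]
    _ = A * Ap := by rw [f1]
  have s2 : (Ap * Ap) * (A * A) = Ap * A := by
    calc (Ap * Ap) * (A * A) = Ap * (Ap * A * A) := by simp only [Matrix.mul_assoc]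
    _ = Ap * A := by rw [f4]
  have g1 : (A * A) * (Ap * Ap) * (A * A) = A * A := by
    rw [s1]
    calc A * Ap * (A * A) = (A * Ap * A) * A := (Matrix.mul_assoc _ _ _).symm
    _ = A * A := by rw [hp1]
  have g2 : (Ap * Ap) * (A * A) * (Ap * Ap) = Ap * Ap := by
    rw [s2]
    calc Ap * A * (Ap * Ap) = (Ap * A * Ap) * Ap := (Matrix.mul_assoc _ _ _).symm
    _ = Ap * Ap := by rw [hp2]
  have g3 : ((A * A) * (Ap * Ap))ᵀ = (A * A) * (Ap * Ap) := by rw [s1]; exact hp3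
  have g4 : ((Ap * Ap) * (A * A))ᵀ = (Ap * Ap) * (A * A) := by rw [s2]; exact hp4
  have hA2 : A2p = Ap * Ap :=
    pinv_unique_aux n (A * A) A2p (Ap * Ap) hq1 hq2 hq3 hq4 g1 g2 g3 g4
  rw [hA2]
  have h5 : A * (Ap * Ap) = Ap := by rw [← Matrix.mul_assoc]; exact f1
  calc A * (Ap * Ap) * A * (Ap * Ap) * A = Ap * A * (Ap * Ap) * A := by rw [h5]
  _ = (Ap * A * Ap) * Ap * A := by simp only [Matrix.mul_assoc]
  _ = Ap * Ap * A := by rw [hp2]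
  _ = Ap := f2
end

section
/- Let A and B be real symmetric positive semidefinite n×n matrices such that the null space of A is contained in the null space of B. Let a > 0 be such that every nonzero eigenvalue of A is at least a, and b > 0 be such that every nonzero eigenvalue of B is at least b. Then for every vector v ∈ ℝⁿ orthogonal to the null space of the product A B (equivalently, v in the range of (A B)ᵀ), one has ‖A B v‖₂ ≥ a·b·‖v‖₂; consequently the smallest nonzero singular value, and hence every nonzero eigenvalue, of A B is at least a·b: λ⁺_min(A B) ≥ λ⁺_min(A) λ⁺_min(B). -/
open Matrix

noncomputable def euclNorm {n : ℕ} (v : Fin n → ℝ) : ℝ :=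
  Real.sqrt (∑ i, v i ^ 2)

lemma inner_eq_dot {n : ℕ} (x y : EuclideanSpace ℝ (Fin n)) :
    @inner ℝ (EuclideanSpace ℝ (Fin n)) _ x y = x.ofLp ⬝ᵥ y.ofLp := by
  simp [PiLp.inner_apply, dotProduct, mul_comm]

lemma sym_shift {n : ℕ} {M : Matrix (Fin n) (Fin n) ℝ} (hM : M.IsHermitian)
    (x y : Fin n → ℝ) : M.mulVec x ⬝ᵥ y = x ⬝ᵥ M.mulVec y := by
  have hMt : Mᵀ = M := by
    have := hM.eq; rwa [conjTranspose_eq_transpose_of_trivial] at this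
  rw [dotProduct_mulVec, ← mulVec_transpose, hMt]

lemma spectral_ineqs {n : ℕ} {M : Matrix (Fin n) (Fin n) ℝ} (hM : M.PosSemidef) {m : ℝ}
    (hm : 0 < m)
    (heig : ∀ (c : ℝ) (v : Fin n → ℝ), v ≠ 0 → M.mulVec v = c • v → c ≠ 0 → m ≤ c) :
    (∀ x : Fin n → ℝ, m * (x ⬝ᵥ M.mulVec x) ≤ M.mulVec x ⬝ᵥ M.mulVec x) ∧
    (∀ x : Fin n → ℝ, (∀ y, M.mulVec y = 0 → x ⬝ᵥ y = 0) → m * (x ⬝ᵥ x) ≤ x ⬝ᵥ M.mulVec x) := by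
  have hH := hM.1
  set μ := hH.eigenvalues with hμ
  set u : Fin n → (Fin n → ℝ) :=
    fun i => (WithLp.equiv 2 (∀ _ : Fin n, ℝ)) (hH.eigenvectorBasis i) with hu
  have hve : ∀ i, M.mulVec (u i) = μ i • (u i) := by
    intro i; simp only [hu]; exact hH.mulVec_eigenvectorBasis i
  have hvne : ∀ i, u i ≠ 0 := by
    intro i
    simp only [hu]
    intro h
    exact hH.eigenvectorBasis.orthonormal.ne_zero i (by simpa using h)
  have hdich : ∀ i, μ i = 0 ∨ m ≤ μ i := by
    intro i
    rcases eq_or_ne (μ i) 0 with h | h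
    · exact Or.inl h
    · exact Or.inr (heig (μ i) (u i) (hvne i) (hve i) h)
  have hnn : ∀ i, 0 ≤ μ i := hM.eigenvalues_nonneg
  have key : ∀ x y : Fin n → ℝ, x ⬝ᵥ y = ∑ i, (u i ⬝ᵥ x) * (u i ⬝ᵥ y) := by
    intro x y
    have := (hH.eigenvectorBasis.sum_inner_mul_inner (WithLp.toLp 2 x : EuclideanSpace ℝ (Fin n)) (WithLp.toLp 2 y)).symm
    simpa [inner_eq_dot, hu, dotProduct, mul_comm] using this
  have hMc : ∀ (x : Fin n → ℝ) (i), u i ⬝ᵥ M.mulVec x = μ i * (u i ⬝ᵥ x) := by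
    intro x i
    rw [← sym_shift hH, hve i, smul_dotProduct]
    rfl
  constructor
  · intro x
    rw [key x (M.mulVec x), key (M.mulVec x) (M.mulVec x), Finset.mul_sum]
    apply Finset.sum_le_sum
    intro i _
    rw [hMc]
    rcases hdich i with h | h
    · simp [h]
    · nlinarith [mul_self_nonneg (u i ⬝ᵥ x), hnn i]
  · intro x hx
    rw [key x x, key x (M.mulVec x), Finset.mul_sum]
    apply Finset.sum_le_sum
    intro i _
    rw [hMc]
    rcases hdich i with h | h
    · have hz : x ⬝ᵥ u i = 0 := hx _ (by rw [hve i, h]; simp)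
      rw [dotProduct_comm] at hz
      simp [hz]
    · nlinarith [mul_self_nonneg (u i ⬝ᵥ x)]

/-- Smallest nonzero eigenvalue of a product of positive semidefinite matrices:
if `Null(A) ⊆ Null(B)`, `a` lower-bounds the nonzero eigenvalues of `A` and `b`
those of `B`, then `‖A B v‖ ≥ a b ‖v‖` for every `v` in the range of `(A B)ᵀ`,
and every nonzero eigenvalue of `A B` is at least `a b`. -/
theorem smallest_nonzero_eigenvalue_product (n : ℕ)
    (A B : Matrix (Fin n) (Fin n) ℝ)
    (hA : A.PosSemidef) (hB : B.PosSemidef)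
    (hnull : ∀ v : Fin n → ℝ, A.mulVec v = 0 → B.mulVec v = 0)
    (a b : ℝ) (ha : 0 < a) (hb : 0 < b)
    (haeig : ∀ (c : ℝ) (v : Fin n → ℝ), v ≠ 0 → A.mulVec v = c • v → c ≠ 0 → a ≤ c)
    (hbeig : ∀ (c : ℝ) (v : Fin n → ℝ), v ≠ 0 → B.mulVec v = c • v → c ≠ 0 → b ≤ c) :
    (∀ v : Fin n → ℝ, (∃ w : Fin n → ℝ, ((A * B)ᵀ).mulVec w = v) →
      a * b * euclNorm v ≤ euclNorm ((A * B).mulVec v)) ∧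
    (∀ (c : ℝ) (v : Fin n → ℝ), v ≠ 0 → (A * B).mulVec v = c • v → c ≠ 0 →
      a * b ≤ c) := by
  have hAs := spectral_ineqs hA ha haeig
  have hBs := spectral_ineqs hB hb hbeig
  have hAt : Aᵀ = A := by
    have := hA.1.eq; rwa [conjTranspose_eq_transpose_of_trivial] at this
  have hBt : Bᵀ = B := by
    have := hB.1.eq; rwa [conjTranspose_eq_transpose_of_trivial] at this
  have dself : ∀ x : Fin n → ℝ, 0 ≤ x ⬝ᵥ x :=
    fun x => Finset.sum_nonneg fun i _ => mul_self_nonneg _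
  have norm_eq : ∀ v : Fin n → ℝ, euclNorm v = Real.sqrt (v ⬝ᵥ v) := by
    intro v
    unfold euclNorm
    congr 1
    simp [dotProduct, pow_two]
  constructor
  · rintro v ⟨w, hw⟩
    have hv : B.mulVec (A.mulVec w) = v := by
      rw [← hw, transpose_mul, hAt, hBt, ← mulVec_mulVec]
    set w1 := B.mulVec v with hw1
    have h1 : ∀ y, B.mulVec y = 0 → v ⬝ᵥ y = 0 := by
      intro y hy
      rw [← hv, sym_shift hB.1, hy, dotProduct_zero]
    have h2 : ∀ y, A.mulVec y = 0 → w1 ⬝ᵥ y = 0 := by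
      intro y hy
      rw [hw1, sym_shift hB.1, hnull y hy, dotProduct_zero]
    have c1 : b * (v ⬝ᵥ v) ≤ v ⬝ᵥ w1 := hBs.2 v h1
    have c2 : b * (v ⬝ᵥ w1) ≤ w1 ⬝ᵥ w1 := hBs.1 v
    have c3 : a * (w1 ⬝ᵥ w1) ≤ w1 ⬝ᵥ A.mulVec w1 := hAs.2 w1 h2
    have c4 : a * (w1 ⬝ᵥ A.mulVec w1) ≤ A.mulVec w1 ⬝ᵥ A.mulVec w1 := hAs.1 w1
    have d1 : b * b * (v ⬝ᵥ v) ≤ w1 ⬝ᵥ w1 := by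
      calc b * b * (v ⬝ᵥ v) = b * (b * (v ⬝ᵥ v)) := by ring
        _ ≤ b * (v ⬝ᵥ w1) := mul_le_mul_of_nonneg_left c1 hb.le
        _ ≤ w1 ⬝ᵥ w1 := c2
    have d2 : a * a * (w1 ⬝ᵥ w1) ≤ A.mulVec w1 ⬝ᵥ A.mulVec w1 := by
      calc a * a * (w1 ⬝ᵥ w1) = a * (a * (w1 ⬝ᵥ w1)) := by ring
        _ ≤ a * (w1 ⬝ᵥ A.mulVec w1) := mul_le_mul_of_nonneg_left c3 ha.le
        _ ≤ A.mulVec w1 ⬝ᵥ A.mulVec w1 := c4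
    have hfin : (a * b) ^ 2 * (v ⬝ᵥ v) ≤ A.mulVec w1 ⬝ᵥ A.mulVec w1 := by
      calc (a * b) ^ 2 * (v ⬝ᵥ v) = a * a * (b * b * (v ⬝ᵥ v)) := by ring
        _ ≤ a * a * (w1 ⬝ᵥ w1) := mul_le_mul_of_nonneg_left d1 (by positivity)
        _ ≤ A.mulVec w1 ⬝ᵥ A.mulVec w1 := d2
    have hAB : (A * B).mulVec v = A.mulVec w1 := by
      rw [← mulVec_mulVec, hw1]
    rw [norm_eq, norm_eq, hAB]
    calc a * b * Real.sqrt (v ⬝ᵥ v)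
        = Real.sqrt ((a * b) ^ 2 * (v ⬝ᵥ v)) := by
          rw [Real.sqrt_mul (sq_nonneg _), Real.sqrt_sq (by positivity)]
      _ ≤ Real.sqrt (A.mulVec w1 ⬝ᵥ A.mulVec w1) := Real.sqrt_le_sqrt hfin
  · intro c v hv0 heq hc0
    set w := B.mulVec v with hwdef
    have hABv : A.mulVec w = c • v := by rw [hwdef, mulVec_mulVec, heq]
    have hworth : ∀ y, A.mulVec y = 0 → w ⬝ᵥ y = 0 := by
      intro y hy
      rw [hwdef, sym_shift hB.1, hnull y hy, dotProduct_zero]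
    have hs : 0 < v ⬝ᵥ w := by
      rcases lt_or_eq_of_le (by simpa using hB.dotProduct_mulVec_nonneg v : 0 ≤ v ⬝ᵥ w) with h | h
      · exact h
      · exfalso
        have hw0 : w = 0 := by
          have := (hB.dotProduct_mulVec_zero_iff v).mp (by simpa using h.symm)
          simpa [hwdef] using this
        have : c • v = 0 := by rw [← hABv, hw0, mulVec_zero]
        exact hv0 (by simpa [hc0] using this)
    have e1 : w ⬝ᵥ A.mulVec w = c * (v ⬝ᵥ w) := by
      rw [hABv, dotProduct_smul, smul_eq_mul, dotProduct_comm]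
    have c3 : a * (w ⬝ᵥ w) ≤ w ⬝ᵥ A.mulVec w := hAs.2 w hworth
    have c2 : b * (v ⬝ᵥ w) ≤ w ⬝ᵥ w := hBs.1 v
    have hfin : a * b * (v ⬝ᵥ w) ≤ c * (v ⬝ᵥ w) := by
      calc a * b * (v ⬝ᵥ w) = a * (b * (v ⬝ᵥ w)) := by ring
        _ ≤ a * (w ⬝ᵥ w) := mul_le_mul_of_nonneg_left c2 ha.le
        _ ≤ w ⬝ᵥ A.mulVec w := c3
        _ = c * (v ⬝ᵥ w) := e1
    exact le_of_mul_le_mul_right hfin hs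
end
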